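/- arXiv:2003.14087 — 6 statements merged into one kernel-verified Lean document; each statement's English description precedes it below -/
import Mathlib

section
/- Let W_{N+1}(ε), …, W_1(ε) be the Kleinrock accumulating-priority expected waiting times defined by the downward recursion. Then for every class i ∈ {1, …, N+1}, lim_{ε ↓ 0} ε · W_i(ε) = (1/b_i) / (Σ_{k=1}^{N+1} λ_k/b_k). -/
open Filter Topology Finset

/-- **Heavy-traffic limit for the Kleinrock accumulating-priority queue.**
Fix `N ≥ 0`, accumulation rates `b 0 > b 1 > … > b N > 0` (class `i+1` of the paper is
index `i`), and for each `ε ∈ (0,1)` positive arrival rates `lam ε i` summing to `1 - ε`,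
converging to positive limits `lamLim i` (summing to `1`) as `ε ↓ 0`.  If `W ε` satisfies
the Kleinrock downward recursion, then for every class `i`,
`ε * W ε i → (1 / b i) / (∑ k, lamLim k / b k)` as `ε ↓ 0`. -/
theorem accumulating_priority_heavy_traffic_waiting_time
    (N : ℕ) (b : Fin (N + 1) → ℝ)
    (hb_pos : ∀ i, 0 < b i) (hb_anti : StrictAnti b)
    (lam : ℝ → Fin (N + 1) → ℝ) (lamLim : Fin (N + 1) → ℝ)
    (hlam_pos : ∀ ε ∈ Set.Ioo (0 : ℝ) 1, ∀ i, 0 < lam ε i)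
    (hlam_sum : ∀ ε ∈ Set.Ioo (0 : ℝ) 1, ∑ i, lam ε i = 1 - ε)
    (hlamLim_pos : ∀ i, 0 < lamLim i)
    (hlamLim_sum : ∑ i, lamLim i = 1)
    (hlam_tendsto : ∀ i, Tendsto (fun ε => lam ε i) (𝓝[>] (0 : ℝ)) (𝓝 (lamLim i)))
    (W : ℝ → Fin (N + 1) → ℝ)
    (hW : ∀ ε ∈ Set.Ioo (0 : ℝ) 1, ∀ i,
      W ε i = (1 / ε - 1 - ∑ k ∈ Finset.Ioi i, lam ε k * (1 - b k / b i) * W ε k) /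
        (1 - ∑ k ∈ Finset.Iic i, lam ε k * (1 - b i / b k))) :
    ∀ i, Tendsto (fun ε => ε * W ε i) (𝓝[>] (0 : ℝ))
      (𝓝 ((1 / b i) / ∑ k, lamLim k / b k)) := by
  have hS_pos : 0 < ∑ k, lamLim k / b k :=
    Finset.sum_pos (fun k _ => div_pos (hlamLim_pos k) (hb_pos k)) ⟨0, Finset.mem_univ 0⟩
  have key : ∀ n : ℕ, ∀ i : Fin (N + 1), N - i.val ≤ n →
      Tendsto (fun ε => ε * W ε i) (𝓝[>] (0 : ℝ))
        (𝓝 ((1 / b i) / ∑ k, lamLim k / b k)) := by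
    intro n
    induction n using Nat.strong_induction_on with
    | _ n IH =>
      intro i hi
      have IHk : ∀ k : Fin (N + 1), i < k →
          Tendsto (fun ε => ε * W ε k) (𝓝[>] (0 : ℝ))
            (𝓝 ((1 / b k) / ∑ k, lamLim k / b k)) := by
        intro k hk
        have h1 : i.val < k.val := hk
        have h2 : k.val ≤ N := Nat.lt_succ_iff.mp k.isLt
        exact IH (N - k.val) (by omega) k le_rfl
      -- splitting the full-range sums at i
      have hunion : Finset.Iic i ∪ Finset.Ioi i = Finset.univ := by
        ext k; simp [le_or_gt]
      have hdisj : Disjoint (Finset.Iic i) (Finset.Ioi i) :=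
        Finset.disjoint_left.mpr fun a ha hb =>
          absurd (Finset.mem_Iic.mp ha) (not_le.mpr (Finset.mem_Ioi.mp hb))
      have hlam_split : ∑ k ∈ Finset.Iic i, lamLim k + ∑ k ∈ Finset.Ioi i, lamLim k = 1 := by
        rw [← Finset.sum_union hdisj, hunion, hlamLim_sum]
      have hlb_split : ∑ k ∈ Finset.Iic i, lamLim k / b k + ∑ k ∈ Finset.Ioi i, lamLim k / b k
          = ∑ k, lamLim k / b k := by
        rw [← Finset.sum_union hdisj, hunion]
      -- the limiting denominator
      have hD_eq : (1 - ∑ k ∈ Finset.Iic i, lamLim k * (1 - b i / b k))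
          = (∑ k ∈ Finset.Ioi i, lamLim k) + b i * ∑ k ∈ Finset.Iic i, lamLim k / b k := by
        have h1 : ∑ k ∈ Finset.Iic i, lamLim k * (1 - b i / b k)
            = ∑ k ∈ Finset.Iic i, lamLim k - b i * ∑ k ∈ Finset.Iic i, lamLim k / b k := by
          rw [Finset.mul_sum, ← Finset.sum_sub_distrib]
          refine Finset.sum_congr rfl fun k _ => ?_
          have hbk := (hb_pos k).ne'
          field_simp
        rw [h1]; linarith
      have hR_pos : 0 < ∑ k ∈ Finset.Iic i, lamLim k / b k :=
        Finset.sum_pos (fun k _ => div_pos (hlamLim_pos k) (hb_pos k))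
          ⟨i, Finset.mem_Iic.mpr le_rfl⟩
      have hQ_nonneg : 0 ≤ ∑ k ∈ Finset.Ioi i, lamLim k :=
        Finset.sum_nonneg fun k _ => (hlamLim_pos k).le
      have hD_pos : 0 < 1 - ∑ k ∈ Finset.Iic i, lamLim k * (1 - b i / b k) := by
        rw [hD_eq]
        have := mul_pos (hb_pos i) hR_pos
        linarith
      -- rewrite the limiting numerator sum
      have hA_eq : ∑ k ∈ Finset.Ioi i, lamLim k * (1 - b k / b i)
            * ((1 / b k) / ∑ k, lamLim k / b k)
          = (∑ k ∈ Finset.Ioi i, lamLim k / b k) / (∑ k, lamLim k / b k)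
            - (∑ k ∈ Finset.Ioi i, lamLim k) / (b i * ∑ k, lamLim k / b k) := by
        rw [Finset.sum_div, Finset.sum_div, ← Finset.sum_sub_distrib]
        refine Finset.sum_congr rfl fun k _ => ?_
        have hbk := (hb_pos k).ne'
        have hbi := (hb_pos i).ne'
        have hS := hS_pos.ne'
        field_simp
      -- the value identity
      have hval : (1 - 0 - ∑ k ∈ Finset.Ioi i, lamLim k * (1 - b k / b i)
            * ((1 / b k) / ∑ k, lamLim k / b k))
          / (1 - ∑ k ∈ Finset.Iic i, lamLim k * (1 - b i / b k))
          = (1 / b i) / ∑ k, lamLim k / b k := by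
        rw [hA_eq, hD_eq]
        have hP : ∑ k ∈ Finset.Ioi i, lamLim k / b k
            = (∑ k, lamLim k / b k) - ∑ k ∈ Finset.Iic i, lamLim k / b k := by linarith
        have hQ : ∑ k ∈ Finset.Ioi i, lamLim k = 1 - ∑ k ∈ Finset.Iic i, lamLim k := by linarith
        rw [hP, hQ]
        have hbi := (hb_pos i).ne'
        have hS := hS_pos.ne'
        have hDne : (1 - ∑ k ∈ Finset.Iic i, lamLim k)
            + b i * ∑ k ∈ Finset.Iic i, lamLim k / b k ≠ 0 := by
          rw [← hQ, ← hD_eq]; exact hD_pos.ne'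
        rw [div_eq_iff hDne]
        field_simp
        ring
      -- convergence of numerator and denominator
      have hnum : Tendsto (fun ε => 1 - ε - ∑ k ∈ Finset.Ioi i,
            lam ε k * (1 - b k / b i) * (ε * W ε k)) (𝓝[>] (0 : ℝ))
          (𝓝 (1 - 0 - ∑ k ∈ Finset.Ioi i, lamLim k * (1 - b k / b i)
            * ((1 / b k) / ∑ k, lamLim k / b k))) := by
        refine Tendsto.sub
          (Tendsto.sub tendsto_const_nhds (tendsto_id.mono_left nhdsWithin_le_nhds)) ?_
        exact tendsto_finset_sum _ fun k hk =>
          ((hlam_tendsto k).mul_const _).mul (IHk k (Finset.mem_Ioi.mp hk))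
      have hden : Tendsto (fun ε => 1 - ∑ k ∈ Finset.Iic i, lam ε k * (1 - b i / b k))
          (𝓝[>] (0 : ℝ))
          (𝓝 (1 - ∑ k ∈ Finset.Iic i, lamLim k * (1 - b i / b k))) :=
        Tendsto.sub tendsto_const_nhds
          (tendsto_finset_sum _ fun k _ => (hlam_tendsto k).mul_const _)
      have hTend := hnum.div hden hD_pos.ne'
      rw [hval] at hTend
      refine hTend.congr' ?_
      filter_upwards [Ioo_mem_nhdsGT_of_mem (Set.left_mem_Ico.mpr one_pos)] with ε hε
      have hεne : ε ≠ 0 := hε.1.ne'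
      rw [hW ε hε i, ← mul_div_assoc]
      congr 1
      simp only [Pi.div_apply]
      congr 1
      have h1 : ε * (1 / ε) = 1 := by field_simp
      rw [mul_sub, mul_sub, h1, mul_one, Finset.mul_sum]
      congr 1
      refine Finset.sum_congr rfl fun k _ => ?_
      ring
  intro i
  exact key (N - i.val) i le_rfl
end

section
/- Let W_{N+1}(ε), …, W_1(ε) be the Kleinrock accumulating-priority expected waiting times defined by the downward recursion, and define the expected queue lengths Q_i(ε) = λ_i(ε) · W_i(ε). Then for every class i ∈ {1, …, N+1}, lim_{ε ↓ 0} ε · Q_i(ε) = (λ_i/b_i) / (Σ_{k=1}^{N+1} λ_k/b_k). -/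
open Filter Topology Finset

/-- Splitting a sum over `Fin (N+1)` at `i`. -/
lemma apq_sum_split {N : ℕ} (i : Fin (N + 1)) (f : Fin (N + 1) → ℝ) :
    ∑ k ∈ Finset.Iic i, f k + ∑ k ∈ Finset.Ioi i, f k = ∑ k, f k := by
  rw [← Finset.sum_union]
  · congr 1
    ext k
    simp [le_or_gt]
  · rw [Finset.disjoint_left]
    intro a ha ha'
    simp only [Finset.mem_Iic] at ha
    simp only [Finset.mem_Ioi] at ha'
    exact absurd ha (not_le.mpr ha')

/-- **Heavy-traffic limit for the expected queue lengths in the Kleinrock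
accumulating-priority queue.**  With `W ε` defined by the Kleinrock downward recursion and
`Q ε i = lam ε i * W ε i`, for every class `i`,
`ε * Q ε i → (lamLim i / b i) / (∑ k, lamLim k / b k)` as `ε ↓ 0`. -/
theorem accumulating_priority_heavy_traffic_queue_length
    (N : ℕ) (b : Fin (N + 1) → ℝ)
    (hb_pos : ∀ i, 0 < b i) (hb_anti : StrictAnti b)
    (lam : ℝ → Fin (N + 1) → ℝ) (lamLim : Fin (N + 1) → ℝ)
    (hlam_pos : ∀ ε ∈ Set.Ioo (0 : ℝ) 1, ∀ i, 0 < lam ε i)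
    (hlam_sum : ∀ ε ∈ Set.Ioo (0 : ℝ) 1, ∑ i, lam ε i = 1 - ε)
    (hlamLim_pos : ∀ i, 0 < lamLim i)
    (hlamLim_sum : ∑ i, lamLim i = 1)
    (hlam_tendsto : ∀ i, Tendsto (fun ε => lam ε i) (𝓝[>] (0 : ℝ)) (𝓝 (lamLim i)))
    (W : ℝ → Fin (N + 1) → ℝ)
    (hW : ∀ ε ∈ Set.Ioo (0 : ℝ) 1, ∀ i,
      W ε i = (1 / ε - 1 - ∑ k ∈ Finset.Ioi i, lam ε k * (1 - b k / b i) * W ε k) /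
        (1 - ∑ k ∈ Finset.Iic i, lam ε k * (1 - b i / b k))) :
    ∀ i, Tendsto (fun ε => ε * (lam ε i * W ε i)) (𝓝[>] (0 : ℝ))
      (𝓝 ((lamLim i / b i) / ∑ k, lamLim k / b k)) := by
  set S : ℝ := ∑ k, lamLim k / b k with hS_def
  have hS : 0 < S :=
    Finset.sum_pos (fun k _ => div_pos (hlamLim_pos k) (hb_pos k)) ⟨0, Finset.mem_univ _⟩
  set c : Fin (N + 1) → ℝ := fun i => (1 / b i) / S with hc_def
  -- the key claim: ε * W ε i → c i
  have key : ∀ n : ℕ, ∀ i : Fin (N + 1), N - i.val ≤ n →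
      Tendsto (fun ε => ε * W ε i) (𝓝[>] (0 : ℝ)) (𝓝 (c i)) := by
    intro n
    induction n using Nat.strong_induction_on with
    | _ n IH =>
      intro i hi
      have hIH : ∀ k ∈ Finset.Ioi i, Tendsto (fun ε => ε * W ε k) (𝓝[>] (0 : ℝ)) (𝓝 (c k)) := by
        intro k hk
        have hik0 : i < k := Finset.mem_Ioi.mp hk
        have hik : i.val < k.val := hik0
        have hkN : k.val ≤ N := Nat.lt_succ_iff.mp k.isLt
        have hiN : i.val < N := lt_of_lt_of_le hik hkN
        have hlt : N - k.val < N - i.val := Nat.sub_lt_sub_left hiN hik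
        exact IH (N - k.val) (lt_of_lt_of_le hlt hi) k le_rfl
      have hbi := hb_pos i
      -- denominator limit
      set D0 : ℝ := 1 - ∑ k ∈ Finset.Iic i, lamLim k * (1 - b i / b k) with hD0_def
      have hD2 : ∑ k ∈ Finset.Iic i, lamLim k * (1 - b i / b k)
          = (∑ k ∈ Finset.Iic i, lamLim k) - b i * ∑ k ∈ Finset.Iic i, lamLim k / b k := by
        rw [Finset.mul_sum, ← Finset.sum_sub_distrib]
        refine Finset.sum_congr rfl fun k _ => ?_
        have hbk := (hb_pos k).ne'
        field_simp
      have hA1le : ∑ k ∈ Finset.Iic i, lamLim k ≤ 1 := by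
        rw [← hlamLim_sum]
        exact Finset.sum_le_sum_of_subset_of_nonneg (Finset.subset_univ _)
          (fun k _ _ => (hlamLim_pos k).le)
      have hB1pos : 0 < ∑ k ∈ Finset.Iic i, lamLim k / b k :=
        Finset.sum_pos (fun k _ => div_pos (hlamLim_pos k) (hb_pos k))
          ⟨i, Finset.mem_Iic.mpr le_rfl⟩
      have hD0pos : 0 < D0 := by
        rw [hD0_def, hD2]
        nlinarith
      have hD : Tendsto (fun ε => 1 - ∑ k ∈ Finset.Iic i, lam ε k * (1 - b i / b k))
          (𝓝[>] (0 : ℝ)) (𝓝 D0) := by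
        exact tendsto_const_nhds.sub
          (tendsto_finset_sum _ fun k _ => (hlam_tendsto k).mul tendsto_const_nhds)
      have hid : Tendsto (fun ε : ℝ => ε) (𝓝[>] (0 : ℝ)) (𝓝 0) :=
        tendsto_id.mono_right nhdsWithin_le_nhds
      have hNum : Tendsto
          (fun ε => 1 - ε - ∑ k ∈ Finset.Ioi i, lam ε k * (1 - b k / b i) * (ε * W ε k))
          (𝓝[>] (0 : ℝ))
          (𝓝 (1 - 0 - ∑ k ∈ Finset.Ioi i, lamLim k * (1 - b k / b i) * c k)) := by
        exact (tendsto_const_nhds.sub hid).sub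
          (tendsto_finset_sum _ fun k hk =>
            ((hlam_tendsto k).mul tendsto_const_nhds).mul (hIH k hk))
      have hTend := hNum.div hD hD0pos.ne'
      -- the limiting value is c i
      have hEq : (1 - 0 - ∑ k ∈ Finset.Ioi i, lamLim k * (1 - b k / b i) * c k) / D0 = c i := by
        have h1 : ∑ k ∈ Finset.Ioi i, lamLim k * (1 - b k / b i) * c k
            = (∑ k ∈ Finset.Ioi i, lamLim k / b k) / S
              - (∑ k ∈ Finset.Ioi i, lamLim k) / (b i * S) := by
          rw [Finset.sum_div, Finset.sum_div, ← Finset.sum_sub_distrib]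
          refine Finset.sum_congr rfl fun k _ => ?_
          have hbk := (hb_pos k).ne'
          simp only [hc_def]
          field_simp
        have hA : (∑ k ∈ Finset.Iic i, lamLim k) + ∑ k ∈ Finset.Ioi i, lamLim k = 1 := by
          rw [apq_sum_split i lamLim, hlamLim_sum]
        have hB : (∑ k ∈ Finset.Iic i, lamLim k / b k)
            + ∑ k ∈ Finset.Ioi i, lamLim k / b k = S := by
          rw [hS_def, apq_sum_split i (fun k => lamLim k / b k)]
        set A1 := ∑ k ∈ Finset.Iic i, lamLim k
        set A2 := ∑ k ∈ Finset.Ioi i, lamLim k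
        set B1 := ∑ k ∈ Finset.Iic i, lamLim k / b k
        set B2 := ∑ k ∈ Finset.Ioi i, lamLim k / b k
        have hA2 : A2 = 1 - A1 := by linarith
        have hB2 : B2 = S - B1 := by linarith
        have hD0' : D0 = 1 - A1 + b i * B1 := by rw [hD0_def, hD2]; ring
        rw [h1, hA2, hB2, hc_def, hD0']
        have hD0pos' : (0:ℝ) < 1 - A1 + b i * B1 := by rw [← hD0']; exact hD0pos
        field_simp
        rw [div_eq_one_iff_eq (by nlinarith)]
        ring
      rw [hEq] at hTend
      refine hTend.congr' ?_
      have hmem : Set.Ioo (0 : ℝ) 1 ∈ 𝓝[>] (0 : ℝ) :=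
        Ioo_mem_nhdsGT_of_mem (by constructor <;> norm_num)
      filter_upwards [hmem] with ε hε
      have hε0 : (0 : ℝ) < ε := hε.1
      simp only [Pi.div_apply]
      rw [hW ε hε i, ← mul_div_assoc]
      congr 1
      rw [mul_sub, mul_sub, mul_one_div_cancel hε0.ne', mul_one, Finset.mul_sum,
        Finset.sum_congr rfl (fun k _ =>
          show ε * (lam ε k * (1 - b k / b i) * W ε k)
            = lam ε k * (1 - b k / b i) * (ε * W ε k) by ring)]
  intro i
  have hkey : Tendsto (fun ε => ε * W ε i) (𝓝[>] (0 : ℝ)) (𝓝 (c i)) := key (N - i.val) i le_rfl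
  have h := (hlam_tendsto i).mul hkey
  have hval : lamLim i * c i = lamLim i / b i / S := by
    rw [hc_def]; ring
  rw [hval] at h
  refine h.congr fun ε => by ring
end

section
/- Let W_{N+1}(ε), …, W_1(ε) be the Kleinrock accumulating-priority expected waiting times defined by the downward recursion, and define the expected queue lengths Q_i(ε) = λ_i(ε) · W_i(ε). Then for every class i ∈ {1, …, N+1}, lim_{ε ↓ 0} Q_i(ε) / (Σ_{k=1}^{N+1} Q_k(ε)) = (λ_i/b_i) / (Σ_{k=1}^{N+1} λ_k/b_k). -/
open Filter Topology Finset

/-- **Heavy-traffic limit of the queue-length proportions in the Kleinrock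
accumulating-priority queue.**  With `W ε` defined by the Kleinrock downward recursion and
`Q ε i = lam ε i * W ε i`, for every class `i`,
`Q ε i / (∑ k, Q ε k) → (lamLim i / b i) / (∑ k, lamLim k / b k)` as `ε ↓ 0`. -/
theorem accumulating_priority_heavy_traffic_queue_proportion
    (N : ℕ) (b : Fin (N + 1) → ℝ)
    (hb_pos : ∀ i, 0 < b i) (hb_anti : StrictAnti b)
    (lam : ℝ → Fin (N + 1) → ℝ) (lamLim : Fin (N + 1) → ℝ)
    (hlam_pos : ∀ ε ∈ Set.Ioo (0 : ℝ) 1, ∀ i, 0 < lam ε i)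
    (hlam_sum : ∀ ε ∈ Set.Ioo (0 : ℝ) 1, ∑ i, lam ε i = 1 - ε)
    (hlamLim_pos : ∀ i, 0 < lamLim i)
    (hlamLim_sum : ∑ i, lamLim i = 1)
    (hlam_tendsto : ∀ i, Tendsto (fun ε => lam ε i) (𝓝[>] (0 : ℝ)) (𝓝 (lamLim i)))
    (W : ℝ → Fin (N + 1) → ℝ)
    (hW : ∀ ε ∈ Set.Ioo (0 : ℝ) 1, ∀ i,
      W ε i = (1 / ε - 1 - ∑ k ∈ Finset.Ioi i, lam ε k * (1 - b k / b i) * W ε k) /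
        (1 - ∑ k ∈ Finset.Iic i, lam ε k * (1 - b i / b k))) :
    ∀ i, Tendsto (fun ε => (lam ε i * W ε i) / ∑ k, lam ε k * W ε k) (𝓝[>] (0 : ℝ))
      (𝓝 ((lamLim i / b i) / ∑ k, lamLim k / b k)) := by
  have hb_ne : ∀ i, b i ≠ 0 := fun i => (hb_pos i).ne'
  set S : ℝ := ∑ k, lamLim k / b k with hS_def
  have hS_pos : 0 < S := Finset.sum_pos (fun k _ => div_pos (hlamLim_pos k) (hb_pos k))
    Finset.univ_nonempty
  set c : ℝ := S⁻¹ with hc_def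
  have hc_pos : 0 < c := inv_pos.mpr hS_pos
  have hmem : Set.Ioo (0 : ℝ) 1 ∈ 𝓝[>] (0 : ℝ) :=
    Ioo_mem_nhdsGT_of_mem ⟨le_refl 0, zero_lt_one⟩
  -- sum splitting
  have hsplit : ∀ (i : Fin (N + 1)) (f : Fin (N + 1) → ℝ),
      ∑ k ∈ Finset.Iic i, f k + ∑ k ∈ Finset.Ioi i, f k = ∑ k, f k := by
    intro i f
    rw [← Finset.sum_union (by
      simp only [Finset.disjoint_left, Finset.mem_Iic, Finset.mem_Ioi]
      intro k hk hk'
      exact absurd hk (not_le.mpr hk'))]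
    congr 1
    ext k
    simp [le_or_gt]
  -- limiting denominator is positive
  have hD_pos : ∀ i : Fin (N + 1),
      0 < 1 - ∑ k ∈ Finset.Iic i, lamLim k * (1 - b i / b k) := by
    intro i
    have h1 : ∑ k ∈ Finset.Iic i, lamLim k * (1 - b i / b k)
        = ∑ k ∈ Finset.Iic i, lamLim k - ∑ k ∈ Finset.Iic i, lamLim k * (b i / b k) := by
      rw [← Finset.sum_sub_distrib]; apply Finset.sum_congr rfl; intro k _; ring
    have h2 : ∑ k ∈ Finset.Iic i, lamLim k ≤ 1 := by
      rw [← hlamLim_sum]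
      exact Finset.sum_le_sum_of_subset_of_nonneg (Finset.subset_univ _)
        (fun k _ _ => (hlamLim_pos k).le)
    have h3 : 0 < ∑ k ∈ Finset.Iic i, lamLim k * (b i / b k) :=
      Finset.sum_pos (fun k _ => mul_pos (hlamLim_pos k) (div_pos (hb_pos i) (hb_pos k)))
        ⟨i, Finset.mem_Iic.mpr le_rfl⟩
    rw [h1]
    linarith
  -- the key heavy-traffic lemma: ε * W ε i → c / b i
  have key : ∀ i : Fin (N + 1),
      (∀ k, i < k → Tendsto (fun ε => ε * W ε k) (𝓝[>] (0 : ℝ)) (𝓝 (c / b k))) →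
      Tendsto (fun ε => ε * W ε i) (𝓝[>] (0 : ℝ)) (𝓝 (c / b i)) := by
    intro i IH
    have heq : ∀ ε ∈ Set.Ioo (0 : ℝ) 1,
        ε * W ε i = (1 - ε - ∑ k ∈ Finset.Ioi i, lam ε k * (1 - b k / b i) * (ε * W ε k)) /
          (1 - ∑ k ∈ Finset.Iic i, lam ε k * (1 - b i / b k)) := by
      intro ε hε
      have hε0 : ε ≠ 0 := hε.1.ne'
      rw [hW ε hε i, ← mul_div_assoc]
      congr 1
      rw [mul_sub, mul_sub, Finset.mul_sum]
      have : ε * (1 / ε) = 1 := by field_simp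
      rw [this, mul_one]
      congr 1
      apply Finset.sum_congr rfl
      intro k _
      ring
    -- limit of the explicit expression
    have hnum : Tendsto (fun ε =>
        1 - ε - ∑ k ∈ Finset.Ioi i, lam ε k * (1 - b k / b i) * (ε * W ε k)) (𝓝[>] (0 : ℝ))
        (𝓝 (1 - 0 - ∑ k ∈ Finset.Ioi i, lamLim k * (1 - b k / b i) * (c / b k))) := by
      apply Tendsto.sub
      · exact (tendsto_const_nhds.sub (tendsto_id.mono_left nhdsWithin_le_nhds))
      · apply tendsto_finset_sum
        intro k hk
        exact ((hlam_tendsto k).mul tendsto_const_nhds).mul (IH k (Finset.mem_Ioi.mp hk))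
    have hden : Tendsto (fun ε =>
        1 - ∑ k ∈ Finset.Iic i, lam ε k * (1 - b i / b k)) (𝓝[>] (0 : ℝ))
        (𝓝 (1 - ∑ k ∈ Finset.Iic i, lamLim k * (1 - b i / b k))) := by
      apply Tendsto.sub tendsto_const_nhds
      exact tendsto_finset_sum _ (fun k _ => (hlam_tendsto k).mul tendsto_const_nhds)
    have hdiv := hnum.div hden (hD_pos i).ne'
    -- identify the limit with c / b i
    have hlim_eq : (1 - 0 - ∑ k ∈ Finset.Ioi i, lamLim k * (1 - b k / b i) * (c / b k)) /
        (1 - ∑ k ∈ Finset.Iic i, lamLim k * (1 - b i / b k)) = c / b i := by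
      have hA : ∑ k ∈ Finset.Ioi i, lamLim k * (1 - b k / b i) * (c / b k)
          = c * (∑ k ∈ Finset.Ioi i, lamLim k / b k)
            - (c / b i) * ∑ k ∈ Finset.Ioi i, lamLim k := by
        rw [Finset.mul_sum, Finset.mul_sum, ← Finset.sum_sub_distrib]
        apply Finset.sum_congr rfl
        intro k _
        field_simp [hb_ne k, hb_ne i]
      have hB : ∑ k ∈ Finset.Iic i, lamLim k * (1 - b i / b k)
          = (∑ k ∈ Finset.Iic i, lamLim k)
            - b i * ∑ k ∈ Finset.Iic i, lamLim k / b k := by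
        rw [Finset.mul_sum, ← Finset.sum_sub_distrib]
        apply Finset.sum_congr rfl
        intro k _
        field_simp [hb_ne k]
      set A1 := ∑ k ∈ Finset.Iic i, lamLim k / b k with hA1
      set A2 := ∑ k ∈ Finset.Ioi i, lamLim k / b k with hA2
      set L1 := ∑ k ∈ Finset.Iic i, lamLim k with hL1
      set L2 := ∑ k ∈ Finset.Ioi i, lamLim k with hL2
      have hAsum : A1 + A2 = S := hsplit i _
      have hLsum : L1 + L2 = 1 := by rw [hL1, hL2, hsplit i _, hlamLim_sum]
      have hcS : c * S = 1 := inv_mul_cancel₀ hS_pos.ne'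
      have hDpos := hD_pos i
      rw [hB] at hDpos
      rw [hA, hB]
      rw [div_eq_div_iff (by linarith) (hb_pos i).ne']
      have hbi := hb_ne i
      have hdivmul : c / b i * L2 * b i = c * L2 := by
        field_simp
      linear_combination hdivmul - b i * hcS + c * hLsum - c * b i * hAsum
    rw [hlim_eq] at hdiv
    apply hdiv.congr'
    filter_upwards [hmem] with ε hε
    simp only [Pi.div_apply]
    exact (heq ε hε).symm
  -- downward induction
  have main : ∀ m : ℕ, ∀ i : Fin (N + 1), N ≤ i.val + m →
      Tendsto (fun ε => ε * W ε i) (𝓝[>] (0 : ℝ)) (𝓝 (c / b i)) := by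
    intro m
    induction m with
    | zero =>
      intro i hi
      apply key
      intro k hk
      have := k.isLt
      have : i.val < k.val := hk
      omega
    | succ m ih =>
      intro i hi
      apply key
      intro k hk
      apply ih
      have : i.val < k.val := hk
      omega
  have hεW : ∀ i, Tendsto (fun ε => ε * W ε i) (𝓝[>] (0 : ℝ)) (𝓝 (c / b i)) :=
    fun i => main N i (by omega)
  -- conclude
  intro i
  have hnum : Tendsto (fun ε => lam ε i * (ε * W ε i)) (𝓝[>] (0 : ℝ))
      (𝓝 (lamLim i * (c / b i))) := (hlam_tendsto i).mul (hεW i)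
  have hden : Tendsto (fun ε => ∑ k, lam ε k * (ε * W ε k)) (𝓝[>] (0 : ℝ))
      (𝓝 (∑ k, lamLim k * (c / b k))) :=
    tendsto_finset_sum _ (fun k _ => (hlam_tendsto k).mul (hεW k))
  have hden_lim : (∑ k, lamLim k * (c / b k)) = c * S := by
    rw [Finset.mul_sum]
    apply Finset.sum_congr rfl
    intro k _
    ring
  have hcS : c * S = 1 := inv_mul_cancel₀ hS_pos.ne'
  have hdiv := hnum.div hden (by rw [hden_lim, hcS]; norm_num)
  have hlim_eq : lamLim i * (c / b i) / (∑ k, lamLim k * (c / b k))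
      = (lamLim i / b i) / S := by
    rw [hden_lim, hcS, div_one, hc_def]
    field_simp
  rw [hlim_eq] at hdiv
  apply hdiv.congr'
  filter_upwards [hmem] with ε hε
  have hε0 : ε ≠ 0 := hε.1.ne'
  simp only [Pi.div_apply]
  have h1 : lam ε i * (ε * W ε i) = ε * (lam ε i * W ε i) := by ring
  have h2 : ∑ k, lam ε k * (ε * W ε k) = ε * ∑ k, lam ε k * W ε k := by
    rw [Finset.mul_sum]; apply Finset.sum_congr rfl; intro k _; ring
  rw [h1, h2, mul_div_mul_left _ _ hε0]
end

section
/- Fix j ∈ {1, …, N} and let S = Σ_{k=1}^{N+1} λ_k/b_k. Suppose that for every k ∈ {j+1, …, N+1} the limits lim_{ε ↓ 0} ε · W_k(ε) = (1/b_k)/S hold. Then also lim_{ε ↓ 0} ε · W_j(ε) = (1/b_j)/S, where W_j(ε) = (1/ε − 1 − Σ_{k=j+1}^{N+1} λ_k(ε)(1 − b_k/b_j) W_k(ε)) / (1 − Σ_{k=1}^{j} λ_k(ε)(1 − b_j/b_k)). -/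
open Filter Topology Finset

/-- **Induction step of the heavy-traffic limit for the Kleinrock accumulating-priority
queue.**  Fix a class `j` (not the lowest one).  If for every lower-priority class
`k > j` the limit `ε * W ε k → (1 / b k) / S` (with `S = ∑ k, lamLim k / b k`) holds,
and `W ε j` is given by the Kleinrock formula (whose denominator is strictly positive),
then also `ε * W ε j → (1 / b j) / S` as `ε ↓ 0`. -/
theorem accumulating_priority_heavy_traffic_induction_step
    (N : ℕ) (b : Fin (N + 1) → ℝ)
    (hb_pos : ∀ i, 0 < b i) (hb_anti : StrictAnti b)
    (lam : ℝ → Fin (N + 1) → ℝ) (lamLim : Fin (N + 1) → ℝ)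
    (hlam_pos : ∀ ε ∈ Set.Ioo (0 : ℝ) 1, ∀ i, 0 < lam ε i)
    (hlam_sum : ∀ ε ∈ Set.Ioo (0 : ℝ) 1, ∑ i, lam ε i = 1 - ε)
    (hlamLim_pos : ∀ i, 0 < lamLim i)
    (hlamLim_sum : ∑ i, lamLim i = 1)
    (hlam_tendsto : ∀ i, Tendsto (fun ε => lam ε i) (𝓝[>] (0 : ℝ)) (𝓝 (lamLim i)))
    (j : Fin (N + 1)) (hj : j ≠ Fin.last N)
    (W : ℝ → Fin (N + 1) → ℝ)
    (hind : ∀ k, j < k → Tendsto (fun ε => ε * W ε k) (𝓝[>] (0 : ℝ))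
      (𝓝 ((1 / b k) / ∑ i, lamLim i / b i)))
    (hden_pos : ∀ ε ∈ Set.Ioo (0 : ℝ) 1,
      0 < 1 - ∑ k ∈ Finset.Iic j, lam ε k * (1 - b j / b k))
    (hWj : ∀ ε ∈ Set.Ioo (0 : ℝ) 1,
      W ε j = (1 / ε - 1 - ∑ k ∈ Finset.Ioi j, lam ε k * (1 - b k / b j) * W ε k) /
        (1 - ∑ k ∈ Finset.Iic j, lam ε k * (1 - b j / b k))) :
    Tendsto (fun ε => ε * W ε j) (𝓝[>] (0 : ℝ))
      (𝓝 ((1 / b j) / ∑ i, lamLim i / b i)) := by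

  set S : ℝ := ∑ i, lamLim i / b i with hS
  have hbj := hb_pos j
  have hS_pos : 0 < S := by
    apply Finset.sum_pos (fun i _ => div_pos (hlamLim_pos i) (hb_pos i)) ⟨j, Finset.mem_univ j⟩
  -- split sums over univ
  have hsplit : ∀ f : Fin (N + 1) → ℝ,
      ∑ k ∈ Finset.Iic j, f k + ∑ k ∈ Finset.Ioi j, f k = ∑ k, f k := by
    intro f
    rw [← Finset.sum_union (by simp [Finset.disjoint_left])]
    congr 1
    ext x
    simp [le_or_gt]
  set A1 : ℝ := ∑ k ∈ Finset.Iic j, lamLim k with hA1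
  set B1 : ℝ := ∑ k ∈ Finset.Iic j, lamLim k / b k with hB1
  have hA : A1 + ∑ k ∈ Finset.Ioi j, lamLim k = 1 := by
    rw [hsplit, hlamLim_sum]
  have hB : B1 + ∑ k ∈ Finset.Ioi j, lamLim k / b k = S := hsplit _
  -- limits of numerator and denominator
  have hden_t : Tendsto (fun ε => 1 - ∑ k ∈ Finset.Iic j, lam ε k * (1 - b j / b k))
      (𝓝[>] (0:ℝ)) (𝓝 (1 - ∑ k ∈ Finset.Iic j, lamLim k * (1 - b j / b k))) := by
    exact tendsto_const_nhds.sub (tendsto_finset_sum _ (fun k _ =>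
      (hlam_tendsto k).mul tendsto_const_nhds))
  have hnum_t : Tendsto
      (fun ε => 1 - ε - ∑ k ∈ Finset.Ioi j, lam ε k * (1 - b k / b j) * (ε * W ε k))
      (𝓝[>] (0:ℝ))
      (𝓝 (1 - 0 - ∑ k ∈ Finset.Ioi j, lamLim k * (1 - b k / b j) * ((1 / b k) / S))) := by
    refine (tendsto_const_nhds.sub (tendsto_nhdsWithin_of_tendsto_nhds tendsto_id)).sub
      (tendsto_finset_sum _ (fun k hk => ?_))
    exact ((hlam_tendsto k).mul tendsto_const_nhds).mul (hind k (Finset.mem_Ioi.mp hk))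
  -- denominator limit is positive
  have hden_exp : ∑ k ∈ Finset.Iic j, lamLim k * (1 - b j / b k) = A1 - b j * B1 := by
    rw [hA1, hB1, Finset.mul_sum, ← Finset.sum_sub_distrib]
    refine Finset.sum_congr rfl (fun k _ => ?_)
    have hbk := (hb_pos k).ne'
    field_simp
  have hlast : j < Fin.last N := lt_of_le_of_ne (Fin.le_last j) hj
  have hA2_pos : (0:ℝ) < ∑ k ∈ Finset.Ioi j, lamLim k :=
    Finset.sum_pos (fun k _ => hlamLim_pos k) ⟨Fin.last N, Finset.mem_Ioi.mpr hlast⟩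
  have hB1_pos : (0:ℝ) < B1 :=
    Finset.sum_pos (fun k _ => div_pos (hlamLim_pos k) (hb_pos k))
      ⟨j, Finset.mem_Iic.mpr le_rfl⟩
  have hLden_pos : 0 < 1 - ∑ k ∈ Finset.Iic j, lamLim k * (1 - b j / b k) := by
    rw [hden_exp]
    nlinarith
  -- numerator limit expression
  have hnum_exp : ∑ k ∈ Finset.Ioi j, lamLim k * (1 - b k / b j) * ((1 / b k) / S)
      = (∑ k ∈ Finset.Ioi j, lamLim k / b k) / S
        - (∑ k ∈ Finset.Ioi j, lamLim k) / (b j * S) := by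
    rw [Finset.sum_div, Finset.sum_div, ← Finset.sum_sub_distrib]
    refine Finset.sum_congr rfl (fun k _ => ?_)
    have hbk := (hb_pos k).ne'
    field_simp
  -- key algebraic identity
  have hkey : (1:ℝ) - 0 - ∑ k ∈ Finset.Ioi j, lamLim k * (1 - b k / b j) * ((1 / b k) / S)
      = ((1 / b j) / S) * (1 - ∑ k ∈ Finset.Iic j, lamLim k * (1 - b j / b k)) := by
    rw [hnum_exp, hden_exp]
    have h2 : ∑ k ∈ Finset.Ioi j, lamLim k = 1 - A1 := by linarith
    have h3 : ∑ k ∈ Finset.Ioi j, lamLim k / b k = S - B1 := by linarith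
    rw [h2, h3]
    field_simp
    ring
  -- the function eventually equals num/den
  have hmem : Set.Ioo (0:ℝ) 1 ∈ 𝓝[>] (0:ℝ) := Ioo_mem_nhdsGT_of_mem (by norm_num)
  have heq : (fun ε => ε * W ε j) =ᶠ[𝓝[>] (0:ℝ)]
      (fun ε => (1 - ε - ∑ k ∈ Finset.Ioi j, lam ε k * (1 - b k / b j) * (ε * W ε k)) /
        (1 - ∑ k ∈ Finset.Iic j, lam ε k * (1 - b j / b k))) := by
    filter_upwards [hmem] with ε hε
    have hε0 : ε ≠ 0 := ne_of_gt hε.1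
    rw [hWj ε hε, mul_div_assoc']
    congr 1
    rw [mul_sub, mul_sub, mul_one_div, div_self hε0, Finset.mul_sum, mul_one]
    congr 1
    exact Finset.sum_congr rfl (fun k _ => by ring)
  rw [tendsto_congr' heq]
  have := hnum_t.div hden_t (ne_of_gt hLden_pos)
  rw [hkey, mul_div_assoc, div_self (ne_of_gt hLden_pos), mul_one] at this
  exact this
end

section
/- Let λ_1, …, λ_{N+1} > 0 and b_1, …, b_{N+1} > 0, set ρ = Σ_{i=1}^{N+1} λ_i and assume ρ > 1. Let T ≥ 0 and let L_1, …, L_{N+1} : [T, ∞) → ℝ be differentiable functions such that for all t ≥ T: (i) the quantities (b_i/λ_i) L_i(t) are equal for all i (the fluid priorities have equalized), and (ii) Σ_{i=1}^{N+1} L_i'(t) = ρ − 1 (the server works at full rate). Then for every i and every t ≥ T, L_i'(t) = (ρ − 1)(λ_i/b_i)/(Σ_{j=1}^{N+1} λ_j/b_j), and consequently lim_{t → ∞} L_i(t)/t = (ρ − 1)(λ_i/b_i)/(Σ_{j=1}^{N+1} λ_j/b_j). -/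
open Filter Topology Finset

/-- **Growth rates of the fluid levels after the priorities equalize.**  Let
`lam i, b i > 0` with `ρ = ∑ i, lam i > 1`, and let `L i` be the fluid level of class
`i`, differentiable on `[T, ∞)` with derivative `L' i`.  If for all `t ≥ T` the fluid
priorities `(b i / lam i) * L i t` are equal across classes and the server works at full
rate, i.e. `∑ i, L' i t = ρ - 1`, then for every class `i` and every `t ≥ T`,
`L' i t = (ρ - 1) * (lam i / b i) / ∑ j, lam j / b j`, and consequently
`L i t / t → (ρ - 1) * (lam i / b i) / ∑ j, lam j / b j` as `t → ∞`. -/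
theorem accumulating_priority_fluid_growth_rate
    (N : ℕ) (lam b : Fin (N + 1) → ℝ)
    (hlam : ∀ i, 0 < lam i) (hb : ∀ i, 0 < b i)
    (hρ : 1 < ∑ i, lam i)
    (T : ℝ) (hT : 0 ≤ T)
    (L L' : Fin (N + 1) → ℝ → ℝ)
    (hderiv : ∀ i, ∀ t, T ≤ t → HasDerivAt (L i) (L' i t) t)
    (heq : ∀ t, T ≤ t → ∀ i j, (b i / lam i) * L i t = (b j / lam j) * L j t)
    (hfull : ∀ t, T ≤ t → ∑ i, L' i t = (∑ i, lam i) - 1) :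
    ∀ i, (∀ t, T ≤ t →
        L' i t = ((∑ j, lam j) - 1) * (lam i / b i) / ∑ j, lam j / b j) ∧
      Tendsto (fun t => L i t / t) atTop
        (𝓝 (((∑ j, lam j) - 1) * (lam i / b i) / ∑ j, lam j / b j)) := by
  set S : ℝ := ∑ j, lam j / b j with hSdef
  have hS : 0 < S := Finset.sum_pos (fun j _ => div_pos (hlam j) (hb j)) ⟨0, Finset.mem_univ 0⟩
  -- priorities of derivatives are equal
  have hkey : ∀ t, T ≤ t → ∀ i j,
      (b i / lam i) * L' i t = (b j / lam j) * L' j t := by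
    intro t ht i j
    have hu : UniqueDiffWithinAt ℝ (Set.Ici T) t := uniqueDiffOn_Ici T t ht
    have hi : HasDerivWithinAt (fun s => (b i / lam i) * L i s)
        ((b i / lam i) * L' i t) (Set.Ici T) t :=
      ((hderiv i t ht).const_mul _).hasDerivWithinAt
    have hj0 : HasDerivWithinAt (fun s => (b j / lam j) * L j s)
        ((b j / lam j) * L' j t) (Set.Ici T) t :=
      ((hderiv j t ht).const_mul _).hasDerivWithinAt
    have hj : HasDerivWithinAt (fun s => (b i / lam i) * L i s)
        ((b j / lam j) * L' j t) (Set.Ici T) t :=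
      hj0.congr (fun s hs => heq s hs i j) (heq t ht i j)
    exact (hi.derivWithin hu).symm.trans (hj.derivWithin hu)
  -- closed form for derivatives
  have hderiv_eq : ∀ i, ∀ t, T ≤ t →
      L' i t = ((∑ j, lam j) - 1) * (lam i / b i) / S := by
    intro i t ht
    have hsum : ((b i / lam i) * L' i t) * S = (∑ j, lam j) - 1 := by
      rw [← hfull t ht, Finset.mul_sum]
      refine Finset.sum_congr rfl fun j _ => ?_
      have h := hkey t ht i j
      have hbj := (hb j).ne'
      have hlj := (hlam j).ne'
      rw [h]
      field_simp
    have hbi := (hb i).ne'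
    have hli := (hlam i).ne'
    have h1 : (b i / lam i) * L' i t = ((∑ j, lam j) - 1) / S :=
      (eq_div_iff hS.ne').mpr hsum
    have h2 : L' i t = (lam i / b i) * (((∑ j, lam j) - 1) / S) := by
      rw [← h1]
      field_simp
    rw [h2]; ring
  intro i
  refine ⟨hderiv_eq i, ?_⟩
  set c : ℝ := ((∑ j, lam j) - 1) * (lam i / b i) / S with hc
  -- L i is affine on [T, ∞)
  have haff : ∀ t, T ≤ t → L i t = L i T + c * (t - T) := by
    intro t ht
    have hcont : ContinuousOn (fun s => L i s - c * s) (Set.Icc T t) := by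
      intro x hx
      exact (((hderiv i x hx.1).sub ((hasDerivAt_id x).const_mul c)).continuousAt).continuousWithinAt
    have hzero : ∀ x ∈ Set.Ico T t,
        HasDerivWithinAt (fun s => L i s - c * s) 0 (Set.Ici x) x := by
      intro x hx
      have h := (hderiv i x hx.1).sub ((hasDerivAt_id x).const_mul c)
      have : L' i x - c * 1 = 0 := by rw [hderiv_eq i x hx.1]; simp [hc]
      rw [this] at h
      exact h.hasDerivWithinAt
    have := constant_of_has_deriv_right_zero hcont hzero t ⟨ht, le_refl t⟩
    -- this : L i t - c * t = L i T - c * T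
    linarith [this]
  -- limit
  have hlim0 : Tendsto (fun t : ℝ => (L i T - c * T) / t + c) atTop (𝓝 c) := by
    have h1 : Tendsto (fun t : ℝ => (L i T - c * T) / t) atTop (𝓝 0) :=
      tendsto_const_nhds.div_atTop tendsto_id
    have := h1.add (tendsto_const_nhds : Tendsto (fun _ : ℝ => c) atTop (𝓝 c))
    simpa using this
  have hev : (fun t => L i t / t) =ᶠ[atTop] (fun t : ℝ => (L i T - c * T) / t + c) := by
    filter_upwards [eventually_ge_atTop (max T 1)] with t ht
    have hT' : T ≤ t := le_trans (le_max_left T 1) ht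
    have ht0 : t ≠ 0 := by
      have : (1:ℝ) ≤ t := le_trans (le_max_right T 1) ht
      linarith
    rw [haff t hT']
    field_simp
    ring
  exact (Tendsto.congr' hev.symm hlim0)
end

section
/- Let C, R, λ, μ > 0 with R > C/μ. Call p ∈ [0, 1] an equilibrium joining probability if: (a) whenever p < 1, it is not the case that both pλ < μ and C < R(μ − pλ); and (b) whenever p > 0, both pλ < μ and C ≤ R(μ − pλ) hold. Then p_e = min(1, (μ − C/R)/λ) is an equilibrium joining probability, and it is the unique one; consequently the equilibrium effective arrival rate p_e λ equals λ if λ < μ − C/R and equals μ − C/R otherwise. -/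
/-- `p ∈ [0,1]` is an equilibrium joining probability in the unobservable M/M/1 queue
with waiting cost `C`, service value `R`, potential arrival rate `lam` and service rate
`μ`: (a) if `p < 1` it is not the case that both `p * lam < μ` and
`C < R * (μ - p * lam)` (no incentive to join more); (b) if `p > 0` then both
`p * lam < μ` and `C ≤ R * (μ - p * lam)` hold (joining is a best response). -/
def IsEquilibriumJoiningProb (C R lam μ p : ℝ) : Prop :=
  p ∈ Set.Icc (0 : ℝ) 1 ∧
  (p < 1 → ¬ (p * lam < μ ∧ C < R * (μ - p * lam))) ∧
  (0 < p → p * lam < μ ∧ C ≤ R * (μ - p * lam))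

/-- **The equilibrium joining probability in the unobservable M/M/1 queue.**  Let
`C, R, lam, μ > 0` with `R > C / μ`.  Then `p_e = min 1 ((μ - C / R) / lam)` is an
equilibrium joining probability, it is the unique one, and the equilibrium effective
arrival rate `p_e * lam` equals `lam` if `lam < μ - C / R` and `μ - C / R` otherwise. -/
theorem mm1_equilibrium_joining_probability
    (C R lam μ : ℝ) (hC : 0 < C) (hR : 0 < R) (hlam : 0 < lam) (hμ : 0 < μ)
    (h : C / μ < R) :
    IsEquilibriumJoiningProb C R lam μ (min 1 ((μ - C / R) / lam)) ∧
    (∀ q, IsEquilibriumJoiningProb C R lam μ q → q = min 1 ((μ - C / R) / lam)) ∧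
    (lam < μ - C / R → min 1 ((μ - C / R) / lam) * lam = lam) ∧
    (¬ lam < μ - C / R → min 1 ((μ - C / R) / lam) * lam = μ - C / R) := by
  have hCRpos : 0 < C / R := div_pos hC hR
  have hCR : C / R < μ := by
    rw [div_lt_iff₀ hR]
    rw [div_lt_iff₀ hμ] at h
    nlinarith
  have hpos : 0 < μ - C / R := by linarith
  set a : ℝ := (μ - C / R) / lam with ha
  have hapos : 0 < a := div_pos hpos hlam
  have hal : a * lam = μ - C / R := div_mul_cancel₀ _ hlam.ne'
  have key : ∀ p : ℝ, (C < R * (μ - p * lam) ↔ p * lam < μ - C / R) := by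
    intro p
    constructor
    · intro hp
      have h1 : C / R < μ - p * lam := (div_lt_iff₀ hR).mpr (by linarith [mul_comm R (μ - p * lam)])
      linarith
    · intro hp
      have h1 : C / R < μ - p * lam := by linarith
      have h2 := (div_lt_iff₀ hR).mp h1
      linarith [mul_comm (μ - p * lam) R]
  have key2 : ∀ p : ℝ, (C ≤ R * (μ - p * lam) ↔ p * lam ≤ μ - C / R) := by
    intro p
    constructor
    · intro hp
      have h1 : C / R ≤ μ - p * lam := (div_le_iff₀ hR).mpr (by linarith [mul_comm R (μ - p * lam)])
      linarith
    · intro hp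
      have h1 : C / R ≤ μ - p * lam := by linarith
      have h2 := (div_le_iff₀ hR).mp h1
      linarith [mul_comm (μ - p * lam) R]
  have lt_a : ∀ p : ℝ, p < a ↔ p * lam < μ - C / R := by
    intro p
    rw [← hal]
    exact (mul_lt_mul_iff_left₀ hlam).symm
  have le_a : ∀ p : ℝ, p ≤ a ↔ p * lam ≤ μ - C / R := by
    intro p
    rw [← hal]
    exact (mul_le_mul_iff_left₀ hlam).symm
  rcases le_or_gt a 1 with hle | hgt
  · have hmin : min 1 a = a := min_eq_right hle
    rw [hmin]
    refine ⟨⟨⟨hapos.le, hle⟩, ?_, ?_⟩, ?_, ?_, ?_⟩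
    · rintro _ ⟨_, hlt⟩
      have := ((lt_a a).mpr ((key a).mp hlt))
      exact absurd this (lt_irrefl a)
    · intro _
      have h1 : a * lam ≤ μ - C / R := hal.le
      exact ⟨by linarith, (key2 a).mpr h1⟩
    · rintro q ⟨⟨hq0, hq1⟩, hA, hB⟩
      by_contra hne
      rcases lt_or_gt_of_ne hne with hlt | hgt'
      · have hq1' : q < 1 := lt_of_lt_of_le hlt hle
        have hql : q * lam < μ - C / R := (lt_a q).mp hlt
        exact hA hq1' ⟨by linarith, (key q).mpr hql⟩
      · have hq0' : 0 < q := lt_trans hapos hgt'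
        have := (le_a q).mpr ((key2 q).mp (hB hq0').2)
        linarith
    · intro hlt
      have h1 : 1 < a := (one_lt_div hlam).mpr hlt
      linarith
    · intro _; exact hal
  · have hmin : min 1 a = 1 := min_eq_left hgt.le
    rw [hmin]
    refine ⟨⟨⟨zero_le_one, le_rfl⟩, ?_, ?_⟩, ?_, ?_, ?_⟩
    · intro h1; exact absurd h1 (lt_irrefl 1)
    · intro _
      have h1 : (1 : ℝ) * lam ≤ μ - C / R := (le_a 1).mp hgt.le
      exact ⟨by linarith, (key2 1).mpr h1⟩
    · rintro q ⟨⟨hq0, hq1⟩, hA, hB⟩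
      by_contra hne
      have hq1' : q < 1 := lt_of_le_of_ne hq1 hne
      have hqa : q < a := lt_trans hq1' hgt
      have hql : q * lam < μ - C / R := (lt_a q).mp hqa
      exact hA hq1' ⟨by linarith, (key q).mpr hql⟩
    · intro _; exact one_mul lam
    · intro hnlt
      exfalso
      have h1 : a ≤ 1 := by rw [div_le_one hlam]; exact not_lt.mp hnlt
      linarith
end
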